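/- arXiv:2501.04611 — 2 statements merged into one kernel-verified Lean document; each statement's English description precedes it below -/
import Mathlib

section
/- Let 0 < s₂ < 1. Then for all n, the infinite product ∏_{k=n+1}^∞ (1 - s₂^k) ≥ exp(- s₂^{n+1} / ((1 - s₂^n)(1 - s₂))). -/
theorem tprod_one_sub_pow_ge (s₂ : ℝ) (h0 : 0 < s₂) (h1 : s₂ < 1) (n : ℕ) (hn : 1 ≤ n) :
    (∏' k : ℕ, (1 - s₂ ^ (n + 1 + k))) ≥
      Real.exp (-(s₂ ^ (n + 1) / ((1 - s₂ ^ n) * (1 - s₂)))) := by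
  have hsn : s₂ ^ n < 1 := pow_lt_one₀ h0.le h1 (by omega)
  have hsn0 : 0 < 1 - s₂ ^ n := by linarith
  have ht : ∀ k : ℕ, s₂ ^ (n + 1 + k) ≤ s₂ ^ n := fun k =>
    pow_le_pow_of_le_one h0.le h1.le (by omega)
  have hpos : ∀ k : ℕ, 0 < 1 - s₂ ^ (n + 1 + k) := fun k => by
    have := ht k; linarith
  have hle1 : ∀ k : ℕ, 1 - s₂ ^ (n + 1 + k) ≤ 1 := fun k => by
    have : 0 < s₂ ^ (n + 1 + k) := pow_pos h0 _
    linarith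
  -- bound on -log
  have hbound : ∀ k : ℕ, -Real.log (1 - s₂ ^ (n + 1 + k)) ≤
      s₂ ^ (n + 1 + k) / (1 - s₂ ^ n) := by
    intro k
    have h₁ := Real.one_sub_inv_le_log_of_pos (hpos k)
    have h₂ : (1 - s₂ ^ (n + 1 + k))⁻¹ ≤ (1 - s₂ ^ n)⁻¹ := by
      apply inv_anti₀ hsn0
      have := ht k; linarith
    have h₃ : -Real.log (1 - s₂ ^ (n + 1 + k)) ≤ (1 - s₂ ^ (n + 1 + k))⁻¹ - 1 := by
      linarith
    have h₄ : (1 - s₂ ^ (n + 1 + k))⁻¹ - 1 =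
        s₂ ^ (n + 1 + k) / (1 - s₂ ^ (n + 1 + k)) := by
      rw [inv_eq_one_div, div_sub_one (hpos k).ne', sub_sub_cancel]
    have h₅ : s₂ ^ (n + 1 + k) / (1 - s₂ ^ (n + 1 + k)) ≤
        s₂ ^ (n + 1 + k) / (1 - s₂ ^ n) := by
      apply div_le_div_of_nonneg_left (pow_pos h0 _).le hsn0
      have := ht k; linarith
    linarith
  have hnonneg : ∀ k : ℕ, 0 ≤ -Real.log (1 - s₂ ^ (n + 1 + k)) := fun k => by
    have := Real.log_nonpos (hpos k).le (hle1 k); linarith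
  -- summability of the majorant
  have hmaj : Summable (fun k : ℕ => s₂ ^ (n + 1 + k) / (1 - s₂ ^ n)) := by
    have : Summable (fun k : ℕ => s₂ ^ k) := summable_geometric_of_lt_one h0.le h1
    have := (this.mul_left (s₂ ^ (n + 1))).div_const (1 - s₂ ^ n)
    refine this.congr fun k => ?_
    ring
  have hsummG : Summable (fun k : ℕ => -Real.log (1 - s₂ ^ (n + 1 + k))) :=
    Summable.of_nonneg_of_le hnonneg hbound hmaj
  have hsumm : Summable (fun k : ℕ => Real.log (1 - s₂ ^ (n + 1 + k))) := by
    simpa using hsummG.neg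
  -- the product equals exp of the sum of logs
  have hprod : HasProd (fun k : ℕ => 1 - s₂ ^ (n + 1 + k))
      (Real.exp (∑' k : ℕ, Real.log (1 - s₂ ^ (n + 1 + k)))) := by
    have hfe : (Real.exp ∘ fun k : ℕ => Real.log (1 - s₂ ^ (n + 1 + k))) =
        fun k : ℕ => 1 - s₂ ^ (n + 1 + k) := funext fun k => Real.exp_log (hpos k)
    exact hfe ▸ hsumm.hasSum.rexp
  rw [hprod.tprod_eq, ge_iff_le, Real.exp_le_exp]
  -- bound the sum of logs
  have hmajsum : ∑' k : ℕ, s₂ ^ (n + 1 + k) / (1 - s₂ ^ n) =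
      s₂ ^ (n + 1) / ((1 - s₂ ^ n) * (1 - s₂)) := by
    have h₁ : ∀ k : ℕ, s₂ ^ (n + 1 + k) / (1 - s₂ ^ n) =
        (s₂ ^ (n + 1) / (1 - s₂ ^ n)) * s₂ ^ k := fun k => by
      rw [pow_add]; ring
    rw [tsum_congr h₁, tsum_mul_left, tsum_geometric_of_lt_one h0.le h1]
    field_simp
  have hG : ∑' k : ℕ, -Real.log (1 - s₂ ^ (n + 1 + k)) ≤
      s₂ ^ (n + 1) / ((1 - s₂ ^ n) * (1 - s₂)) := by
    rw [← hmajsum]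
    exact Summable.tsum_le_tsum hbound hsummG hmaj
  rw [tsum_neg] at hG
  linarith
end

section
/- Let A, B be n×n positive definite Hermitian matrices with A ⪰ B (A − B positive semidefinite), and let A/A₁ and B/B₁ denote the Schur complements of their respective top-left k×k blocks A₁, B₁. Then det(A/A₁) ≥ det(B/B₁). -/
open scoped ComplexOrder

open Matrix

-- PSD + nonzero det → PosDef
lemma aux_posDef_of_det_ne_zero {n : Type*} [Fintype n] [DecidableEq n]
    {M : Matrix n n ℂ} (hM : M.PosSemidef) (hdet : M.det ≠ 0) : M.PosDef := by
  refine posDef_iff_dotProduct_mulVec.mpr ⟨hM.1, fun x hx => lt_of_le_of_ne (hM.dotProduct_mulVec_nonneg x) ?_⟩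
  intro h0
  apply hx
  have hMx : M *ᵥ x = 0 := (hM.dotProduct_mulVec_zero_iff x).mp h0.symm
  have hinj : Function.Injective (M.mulVec) :=
    mulVec_injective_iff_isUnit.mpr ((isUnit_iff_isUnit_det M).mpr hdet.isUnit)
  have := hinj (by simpa using hMx : M *ᵥ x = M *ᵥ 0)
  simpa using this

-- top-left block of PosDef is PosDef
lemma aux_toBlocks₁₁_posDef {α β : Type*} [Fintype α] [Fintype β]
    {M : Matrix (α ⊕ β) (α ⊕ β) ℂ} (hM : M.PosDef) : M.toBlocks₁₁.PosDef := by
  refine posDef_iff_dotProduct_mulVec.mpr ⟨?_, ?_⟩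
  · ext i j
    simpa [toBlocks₁₁, conjTranspose_apply] using congrFun (congrFun hM.1 (Sum.inl i)) (Sum.inl j)
  · intro x hx
    have hz : Sum.elim x (0 : β → ℂ) ≠ 0 := by
      intro h
      apply hx
      ext i
      exact congrFun h (Sum.inl i)
    have := hM.dotProduct_mulVec_pos hz
    convert this using 1
    rw [← fromBlocks_toBlocks M, fromBlocks_mulVec]
    simp [Function.star_sumElim, toBlocks₁₁]

-- M ⪰ 1 → eigenvalues ≥ 1
lemma aux_one_le_eigenvalues {n : Type*} [Fintype n] [DecidableEq n]
    {M : Matrix n n ℂ} (hM : M.IsHermitian) (h : (M - 1).PosSemidef) (i : n) :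
    1 ≤ hM.eigenvalues i := by
  have h0 := h.re_dotProduct_nonneg ⇑(hM.eigenvectorBasis i)
  have hv : dotProduct (star ⇑(hM.eigenvectorBasis i)) ⇑(hM.eigenvectorBasis i) = 1 := by
    rw [dotProduct_comm, ← EuclideanSpace.inner_eq_star_dotProduct, inner_self_eq_norm_sq_to_K,
      hM.eigenvectorBasis.orthonormal.1 i]
    norm_num
  rw [sub_mulVec, one_mulVec, dotProduct_sub, map_sub, hv, RCLike.one_re, sub_nonneg] at h0
  calc (1 : ℝ) ≤ _ := h0
    _ = hM.eigenvalues i := (hM.eigenvalues_eq i).symm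

-- determinant monotonicity in the Loewner order
open scoped MatrixOrder in
lemma aux_det_le_det {n : Type*} [Fintype n] [DecidableEq n]
    {A B : Matrix n n ℂ} (hA : A.PosSemidef) (hB : B.PosDef)
    (hAB : (A - B).PosSemidef) : B.det ≤ A.det := by
  set C := CFC.sqrt B with hCdef
  have hC : C.PosSemidef := nonneg_iff_posSemidef.mp (CFC.sqrt_nonneg B)
  have hCC : C * C = B := CFC.sqrt_mul_sqrt_self B (nonneg_iff_posSemidef.mpr hB.posSemidef)
  have hdetB : (0 : ℂ) < B.det := hB.det_pos
  have hdetC : C.det ≠ 0 := by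
    intro h
    rw [← hCC, det_mul, h, mul_zero] at hdetB
    exact lt_irrefl _ hdetB
  have hCpd : C.PosDef := aux_posDef_of_det_ne_zero hC hdetC
  haveI : Invertible C := hCpd.isUnit.invertible
  have hCiH : C⁻¹.IsHermitian := hCpd.inv.1
  set M := C⁻¹ * A * C⁻¹ with hMdef
  have hMH : M.IsHermitian := by
    have : C⁻¹ᴴ * A * C⁻¹ = M := by rw [hCiH]
    rw [← this]
    exact isHermitian_conjTranspose_mul_mul _ hA.1
  have hM1 : (M - 1).PosSemidef := by
    have h1 : C⁻¹ * B * C⁻¹ = 1 := by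
      rw [← hCC, ← Matrix.mul_assoc, Matrix.nonsing_inv_mul _ hdetC.isUnit, Matrix.one_mul,
        Matrix.mul_nonsing_inv _ hdetC.isUnit]
    have key : M - 1 = C⁻¹ᴴ * (A - B) * C⁻¹ := by
      rw [hCiH, Matrix.mul_sub, Matrix.sub_mul, h1]
    rw [key]
    exact hAB.conjTranspose_mul_mul_same _
  have hdetM : A.det = B.det * M.det := by
    have : M.det = C.det⁻¹ * A.det * C.det⁻¹ := by
      rw [hMdef, det_mul, det_mul, det_nonsing_inv, Ring.inverse_eq_inv]
    rw [this, ← hCC, det_mul]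
    field_simp
  rw [hdetM, hMH.det_eq_prod_eigenvalues]
  have heig := aux_one_le_eigenvalues hMH hM1
  have hprod : (1 : ℝ) ≤ ∏ i, hMH.eigenvalues i := by
    calc (1 : ℝ) = ∏ _i : n, 1 := by simp
      _ ≤ ∏ i, hMH.eigenvalues i :=
        Finset.prod_le_prod (fun i _ => zero_le_one) (fun i _ => heig i)
  obtain ⟨b, hb0, hbB⟩ : ∃ b : ℝ, 0 < b ∧ B.det = (b : ℂ) := by
    refine ⟨∏ i, hB.1.eigenvalues i, ?_, ?_⟩
    · exact Finset.prod_pos fun i _ => hB.eigenvalues_pos i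
    · rw [hB.1.det_eq_prod_eigenvalues]; push_cast; rfl
  rw [hbB]
  have hcast : ∀ x : ℝ, (RCLike.ofReal x : ℂ) = (x : ℂ) := fun x => rfl
  norm_cast
  have hr : b ≤ b * ∏ i, hMH.eigenvalues i := by nlinarith
  show (b : ℂ) ≤ (b : ℂ) * ((∏ i, hMH.eigenvalues i : ℝ) : ℂ)
  rw [← Complex.ofReal_mul]
  exact_mod_cast hr

/-- Monotonicity of the determinant of the Schur complement in the Loewner order. -/
theorem det_schur_complement_mono {k l : ℕ}
    (A B : Matrix (Fin k ⊕ Fin l) (Fin k ⊕ Fin l) ℂ)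
    (hA : A.PosDef) (hB : B.PosDef) (hAB : (A - B).PosSemidef) :
    (B.toBlocks₂₂ - B.toBlocks₂₁ * B.toBlocks₁₁⁻¹ * B.toBlocks₁₂).det ≤
      (A.toBlocks₂₂ - A.toBlocks₂₁ * A.toBlocks₁₁⁻¹ * A.toBlocks₁₂).det := by
  classical
  have hA1 : A.toBlocks₁₁.PosDef := aux_toBlocks₁₁_posDef hA
  have hB1 : B.toBlocks₁₁.PosDef := aux_toBlocks₁₁_posDef hB
  haveI : Invertible A.toBlocks₁₁ := hA1.isUnit.invertible
  haveI : Invertible B.toBlocks₁₁ := hB1.isUnit.invertible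
  have hA21 : A.toBlocks₂₁ = A.toBlocks₁₂ᴴ := by
    ext i j
    simpa [toBlocks₂₁, toBlocks₁₂, conjTranspose_apply] using
      (congrFun (congrFun hA.1 (Sum.inr i)) (Sum.inl j)).symm
  have hB21 : B.toBlocks₂₁ = B.toBlocks₁₂ᴴ := by
    ext i j
    simpa [toBlocks₂₁, toBlocks₁₂, conjTranspose_apply] using
      (congrFun (congrFun hB.1 (Sum.inr i)) (Sum.inl j)).symm
  have hAblocks : fromBlocks A.toBlocks₁₁ A.toBlocks₁₂ A.toBlocks₁₂ᴴ A.toBlocks₂₂ = A := by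
    rw [← hA21, fromBlocks_toBlocks]
  have hBblocks : fromBlocks B.toBlocks₁₁ B.toBlocks₁₂ B.toBlocks₁₂ᴴ B.toBlocks₂₂ = B := by
    rw [← hB21, fromBlocks_toBlocks]
  set SA := A.toBlocks₂₂ - A.toBlocks₂₁ * A.toBlocks₁₁⁻¹ * A.toBlocks₁₂ with hSAdef
  set SB := B.toBlocks₂₂ - B.toBlocks₂₁ * B.toBlocks₁₁⁻¹ * B.toBlocks₁₂ with hSBdef
  have hSA' : SA = A.toBlocks₂₂ - A.toBlocks₁₂ᴴ * A.toBlocks₁₁⁻¹ * A.toBlocks₁₂ := by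
    rw [hSAdef, hA21]
  have hSB' : SB = B.toBlocks₂₂ - B.toBlocks₁₂ᴴ * B.toBlocks₁₁⁻¹ * B.toBlocks₁₂ := by
    rw [hSBdef, hB21]
  have hSBpsd : SB.PosSemidef := by
    rw [hSB']
    exact (PosDef.fromBlocks₁₁ _ _ hB1).mp (hBblocks ▸ hB.posSemidef)
  have detB_eq : B.det = B.toBlocks₁₁.det * SB.det := by
    conv_lhs => rw [← hBblocks]
    rw [det_fromBlocks₁₁, invOf_eq_nonsing_inv, hSB']
  have hSBpd : SB.PosDef := by
    refine aux_posDef_of_det_ne_zero hSBpsd fun h => ?_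
    have := hB.det_pos
    rw [detB_eq, h, mul_zero] at this
    exact lt_irrefl _ this
  have hSAH : SA.IsHermitian := by
    rw [hSA']
    exact (IsHermitian.fromBlocks₁₁ A.toBlocks₁₂ A.toBlocks₂₂ hA1.1).mp (hAblocks ▸ hA.1)
  have hdiff : (SA - SB).PosSemidef := by
    refine PosSemidef.of_dotProduct_mulVec_nonneg (hSAH.sub hSBpsd.1) fun y => ?_
    set x := -((A.toBlocks₁₁⁻¹ * A.toBlocks₁₂) *ᵥ y) with hxdef
    have e1 := schur_complement_eq₁₁ A.toBlocks₁₂ A.toBlocks₂₂ x y hA1.1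
    have e2 := schur_complement_eq₁₁ B.toBlocks₁₂ B.toBlocks₂₂ x y hB1.1
    rw [hAblocks, hxdef, neg_add_cancel, star_zero, zero_vecMul, zero_dotProduct, zero_add] at e1
    rw [hBblocks] at e2
    have e3 := hAB.dotProduct_mulVec_nonneg (x ⊕ᵥ y)
    rw [sub_mulVec, dotProduct_sub, dotProduct_mulVec, dotProduct_mulVec, e1, e2] at e3
    have hb1 : 0 ≤ star (x + (B.toBlocks₁₁⁻¹ * B.toBlocks₁₂) *ᵥ y) ᵥ* B.toBlocks₁₁ ⬝ᵥ
        (x + (B.toBlocks₁₁⁻¹ * B.toBlocks₁₂) *ᵥ y) := by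
      rw [← dotProduct_mulVec]
      exact hB1.posSemidef.dotProduct_mulVec_nonneg _
    rw [sub_mulVec, dotProduct_sub, hSA', hSB']
    rw [dotProduct_mulVec, dotProduct_mulVec]
    have h4 := add_nonneg e3 hb1
    convert h4 using 1
    ring
  have hSApsd : SA.PosSemidef := by
    have := hSBpd.posSemidef.add hdiff
    rwa [add_sub_cancel] at this
  exact aux_det_le_det hSApsd hSBpd hdiff
end
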